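/- arXiv:1908.06774 — 3 statements merged into one kernel-verified Lean document; each statement's English description precedes it below -/
import Mathlib

section
/- Let q : ℝ → ℂ be a continuous 1-periodic function and let p ∈ [1, ∞). Then lim_{λ → 0⁺} ∫_ℝ λ^{1/2} |q(x)|^p e^{−pλx²} dx = √(π/p) · ∫₀¹ |q(x)|^p dx. Consequently, for q_λ(x) := λ^{1/(2p)} q(x) e^{−λx²} one has ‖q_λ‖_{L^p(ℝ)} → (π/p)^{1/(2p)} ‖q‖_{L^p(0,1)} as λ → 0⁺. -/
open MeasureTheory Filter Real Set
open scoped Topology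

noncomputable section


/-- A continuous 1-periodic real function is bounded. -/
lemma aux_periodic_bound {f : ℝ → ℝ} (hf : Continuous f) (hper : Function.Periodic f 1) :
    ∃ M : ℝ, 0 ≤ M ∧ ∀ x, |f x| ≤ M := by
  obtain ⟨M, hM⟩ := (isCompact_Icc (a := (0:ℝ)) (b := 1)).exists_bound_of_continuousOn
    hf.continuousOn
  refine ⟨max M 0, le_max_right _ _, fun x => ?_⟩
  have h1 : f x = f (Int.fract x) := by
    have h := hper.sub_int_mul_eq (x := x) ⌊x⌋
    rw [mul_one, Int.self_sub_floor] at h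
    exact h.symm
  rw [h1]
  have h2 : Int.fract x ∈ Icc (0:ℝ) 1 :=
    ⟨Int.fract_nonneg x, (Int.fract_lt_one x).le⟩
  exact le_trans (by simpa using hM _ h2) (le_max_left _ _)

lemma aux_hasDerivAt_gauss (b x : ℝ) :
    HasDerivAt (fun x : ℝ => Real.exp (-b * x ^ 2)) (-2 * b * x * Real.exp (-b * x ^ 2)) x := by
  have h : HasDerivAt (fun x : ℝ => -b * x ^ 2) (-b * (2 * x ^ 1)) x :=
    ((hasDerivAt_pow 2 x).const_mul (-b)).congr_deriv (by push_cast; ring)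
  have := h.exp
  convert this using 1
  ring

lemma aux_tendsto_gauss_atTop {b : ℝ} (hb : 0 < b) :
    Tendsto (fun x : ℝ => Real.exp (-b * x ^ 2)) atTop (𝓝 0) := by
  have h1 : Tendsto (fun x : ℝ => -b * x ^ 2) atTop atBot :=
    tendsto_neg_const_mul_pow_atTop two_ne_zero (by linarith : -b < 0)
  exact tendsto_exp_atBot.comp h1

lemma aux_tendsto_gauss_atBot {b : ℝ} (hb : 0 < b) :
    Tendsto (fun x : ℝ => Real.exp (-b * x ^ 2)) atBot (𝓝 0) := by
  have := (aux_tendsto_gauss_atTop hb).comp tendsto_neg_atBot_atTop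
  simpa [Function.comp_def] using this

lemma aux_integral_Ioi_mul_gauss {b : ℝ} (hb : 0 < b) :
    ∫ x in Ioi (0:ℝ), x * Real.exp (-b * x ^ 2) = (2 * b)⁻¹ := by
  have hderiv : ∀ x ∈ Ici (0:ℝ),
      HasDerivAt (fun x : ℝ => -(2 * b)⁻¹ * Real.exp (-b * x ^ 2))
        (x * Real.exp (-b * x ^ 2)) x := by
    intro x _
    have := (aux_hasDerivAt_gauss b x).const_mul (-(2 * b)⁻¹)
    refine this.congr_deriv ?_
    field_simp
  have htends : Tendsto (fun x : ℝ => -(2 * b)⁻¹ * Real.exp (-b * x ^ 2)) atTop (𝓝 0) := by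
    have := (aux_tendsto_gauss_atTop hb).const_mul (-(2 * b)⁻¹)
    simpa using this
  have := integral_Ioi_of_hasDerivAt_of_tendsto' hderiv
    ((integrable_mul_exp_neg_mul_sq hb).integrableOn) htends
  simpa using this

lemma aux_integral_abs_gauss {b : ℝ} (hb : 0 < b) :
    ∫ x : ℝ, |x| * Real.exp (-b * x ^ 2) = b⁻¹ := by
  have h : ∫ x : ℝ, (fun t : ℝ => t * Real.exp (-b * t ^ 2)) |x|
      = 2 * ∫ x in Ioi (0:ℝ), x * Real.exp (-b * x ^ 2) := integral_comp_abs (f := fun t : ℝ => t * Real.exp (-b * t ^ 2))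
  have h2 : ∀ x : ℝ, (fun t : ℝ => t * Real.exp (-b * t ^ 2)) |x|
      = |x| * Real.exp (-b * x ^ 2) := by
    intro x; simp [sq_abs]
  rw [show (fun x : ℝ => |x| * Real.exp (-b * x ^ 2))
      = fun x : ℝ => (fun t : ℝ => t * Real.exp (-b * t ^ 2)) |x| from funext fun x => (h2 x).symm]
  rw [h, aux_integral_Ioi_mul_gauss hb]
  field_simp

lemma aux_integrable_abs_gauss {b : ℝ} (hb : 0 < b) :
    Integrable (fun x : ℝ => |x| * Real.exp (-b * x ^ 2)) := by
  have := (integrable_mul_exp_neg_mul_sq hb).abs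
  refine this.congr (Eventually.of_forall fun x => ?_)
  simp [abs_mul, abs_of_nonneg (Real.exp_pos _).le]

/-- Key limit lemma for continuous 1-periodic real functions. -/
theorem aux_key (f : ℝ → ℝ) (hf : Continuous f) (hper : Function.Periodic f 1)
    (b : ℝ) (hb : 0 < b) :
    Tendsto (fun lam : ℝ => Real.sqrt lam * ∫ x : ℝ, f x * Real.exp (-(b * lam) * x ^ 2))
      (𝓝[>] 0) (𝓝 (Real.sqrt (π / b) * ∫ t in (0:ℝ)..1, f t)) := by
  set c : ℝ := ∫ t in (0:ℝ)..1, f t with hc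
  set g : ℝ → ℝ := fun x => f x - c with hgdef
  have hg : Continuous g := hf.sub continuous_const
  have hgper : Function.Periodic g 1 := fun x => by simp [hgdef, hper x]
  set G : ℝ → ℝ := fun x => ∫ t in (0:ℝ)..x, g t with hGdef
  have hGder : ∀ x : ℝ, HasDerivAt G (g x) x := fun x =>
    intervalIntegral.integral_hasDerivAt_right (hg.intervalIntegrable _ _)
      (hg.stronglyMeasurableAtFilter _ _) hg.continuousAt
  have hGcont : Continuous G :=
    continuous_iff_continuousAt.2 fun x => (hGder x).continuousAt
  have hint_g : ∫ t in (0:ℝ)..1, g t = 0 := by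
    rw [hgdef]
    rw [intervalIntegral.integral_sub (hf.intervalIntegrable _ _) intervalIntegrable_const]
    simp [hc]
  have hGper : Function.Periodic G 1 := by
    intro x
    have h1 : G (x + 1) = G x + ∫ t in x..(x + 1), g t := by
      rw [hGdef]
      exact (intervalIntegral.integral_add_adjacent_intervals (hg.intervalIntegrable _ _)
        (hg.intervalIntegrable _ _)).symm
    have h2 : ∫ t in x..(x + 1), g t = ∫ t in (0:ℝ)..(0 + 1), g t :=
      hgper.intervalIntegral_add_eq x 0
    rw [h1, h2]
    simpa using hint_g
  obtain ⟨Mf, hMf0, hMf⟩ := aux_periodic_bound hf hper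
  obtain ⟨MG, hMG0, hMG⟩ := aux_periodic_bound hGcont hGper
  -- the remainder
  set R : ℝ → ℝ := fun lam => ∫ x : ℝ, (2 * (b * lam) * x) * G x * Real.exp (-(b * lam) * x ^ 2)
    with hRdef
  have main : ∀ lam : ℝ, 0 < lam →
      Real.sqrt lam * ∫ x : ℝ, f x * Real.exp (-(b * lam) * x ^ 2)
        = Real.sqrt (π / b) * c + Real.sqrt lam * R lam := by
    intro lam hlam
    set b' : ℝ := b * lam with hb'def
    have hb' : 0 < b' := mul_pos hb hlam
    set e : ℝ → ℝ := fun x => Real.exp (-b' * x ^ 2) with hedef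
    have Ie : Integrable e := integrable_exp_neg_mul_sq hb'
    have Ige : Integrable (fun x => g x * e x) :=
      Ie.bdd_mul (c := Mf + |c|) hg.aestronglyMeasurable
        (Eventually.of_forall fun x => by
          have := hMf x
          simp only [hgdef, Real.norm_eq_abs]
          exact (abs_sub _ _).trans (by linarith))
    have IxGe : Integrable (fun x => (2 * b' * x) * G x * e x) := by
      have h1 : Integrable (fun x : ℝ => (2 * b' * G x) * (x * e x)) :=
        (integrable_mul_exp_neg_mul_sq hb').bdd_mul
          (c := 2 * b' * MG) ((continuous_const.mul hGcont).aestronglyMeasurable)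
          (Eventually.of_forall fun x => by
            have := hMG x
            rw [Real.norm_eq_abs, abs_mul, abs_of_nonneg (by positivity : (0:ℝ) ≤ 2 * b')]
            exact mul_le_mul_of_nonneg_left this (by positivity))
      exact h1.congr (Eventually.of_forall fun x => by ring)
    -- integration by parts : ∫ g e = ∫ (2 b' x) G e
    have hFder : ∀ x : ℝ, HasDerivAt (fun x => G x * e x)
        (g x * e x - (2 * b' * x) * G x * e x) x := by
      intro x
      have := (hGder x).mul (aux_hasDerivAt_gauss b' x)
      refine this.congr_deriv ?_
      simp only [hedef]
      ring
    have hFtop : Tendsto (fun x => G x * e x) atTop (𝓝 0) := by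
      have hbd := (aux_tendsto_gauss_atTop hb').const_mul MG
      rw [mul_zero] at hbd
      apply squeeze_zero_norm (fun x => ?_) hbd
      · calc ‖G x * e x‖ = |G x| * e x := by
              rw [norm_mul, Real.norm_eq_abs, Real.norm_eq_abs, abs_of_nonneg (Real.exp_pos _).le]
            _ ≤ MG * e x := mul_le_mul_of_nonneg_right (hMG x) (Real.exp_pos _).le
    have hFbot : Tendsto (fun x => G x * e x) atBot (𝓝 0) := by
      have hbd := (aux_tendsto_gauss_atBot hb').const_mul MG
      rw [mul_zero] at hbd
      apply squeeze_zero_norm (fun x => ?_) hbd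
      · calc ‖G x * e x‖ = |G x| * e x := by
              rw [norm_mul, Real.norm_eq_abs, Real.norm_eq_abs, abs_of_nonneg (Real.exp_pos _).le]
            _ ≤ MG * e x := mul_le_mul_of_nonneg_right (hMG x) (Real.exp_pos _).le
    have hφint : Integrable (fun x => g x * e x - (2 * b' * x) * G x * e x) := Ige.sub IxGe
    have hIoi : ∫ x in Ioi (0:ℝ), (g x * e x - (2 * b' * x) * G x * e x) = 0 := by
      have := integral_Ioi_of_hasDerivAt_of_tendsto' (a := (0:ℝ))
        (fun x _ => hFder x) hφint.integrableOn hFtop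
      rw [this]
      simp [hGdef, hedef]
    have hIic : ∫ x in Iic (0:ℝ), (g x * e x - (2 * b' * x) * G x * e x) = 0 := by
      have := integral_Iic_of_hasDerivAt_of_tendsto' (a := (0:ℝ))
        (fun x _ => hFder x) hφint.integrableOn hFbot
      rw [this]
      simp [hGdef, hedef]
    have hIBP : ∫ x : ℝ, g x * e x = ∫ x : ℝ, (2 * b' * x) * G x * e x := by
      have h0 : ∫ x : ℝ, (g x * e x - (2 * b' * x) * G x * e x) = 0 := by
        rw [← intervalIntegral.integral_Iic_add_Ioi hφint.integrableOn hφint.integrableOn, hIoi, hIic]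
        norm_num
      rw [integral_sub Ige IxGe] at h0
      linarith
    -- split off the mean
    have hsplit : ∫ x : ℝ, f x * e x = c * Real.sqrt (π / b') + ∫ x : ℝ, g x * e x := by
      have hfun : (fun x : ℝ => f x * e x) = fun x => c * e x + g x * e x := by
        funext x; simp only [hgdef]; ring
      rw [hfun, integral_add (Ie.const_mul c) Ige, integral_const_mul, hedef,
        integral_gaussian]
    have hsqrt : Real.sqrt lam * Real.sqrt (π / b') = Real.sqrt (π / b) := by
      rw [← Real.sqrt_mul hlam.le]
      congr 1
      rw [hb'def]
      field_simp
    calc Real.sqrt lam * ∫ x : ℝ, f x * Real.exp (-(b * lam) * x ^ 2)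
        = Real.sqrt lam * (c * Real.sqrt (π / b') + ∫ x : ℝ, g x * e x) := by rw [← hsplit]
      _ = (Real.sqrt lam * Real.sqrt (π / b')) * c + Real.sqrt lam * ∫ x : ℝ, g x * e x := by ring
      _ = Real.sqrt (π / b) * c + Real.sqrt lam * R lam := by
          rw [hsqrt, hIBP, hRdef]
  -- bound on R
  have hRbound : ∀ lam : ℝ, 0 < lam → |R lam| ≤ 2 * MG := by
    intro lam hlam
    set b' : ℝ := b * lam with hb'def
    have hb' : 0 < b' := mul_pos hb hlam
    have hle : ‖R lam‖ ≤ ∫ x : ℝ, (2 * b' * MG) * (|x| * Real.exp (-b' * x ^ 2)) := by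
      apply norm_integral_le_of_norm_le ((aux_integrable_abs_gauss hb').const_mul _)
      refine Eventually.of_forall fun x => ?_
      have h1 : ‖(2 * b' * x) * G x * Real.exp (-b' * x ^ 2)‖
          = (2 * b') * |x| * |G x| * Real.exp (-b' * x ^ 2) := by
        simp only [Real.norm_eq_abs, abs_mul, abs_of_nonneg (Real.exp_pos _).le,
          abs_of_nonneg (by positivity : (0:ℝ) ≤ 2 * b')]
      rw [h1]
      have := hMG x
      have hxe : (2 * b') * |x| * |G x| * Real.exp (-b' * x ^ 2)
          ≤ (2 * b') * |x| * MG * Real.exp (-b' * x ^ 2) := by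
        have h2 : (2 * b') * |x| * |G x| ≤ (2 * b') * |x| * MG :=
          mul_le_mul_of_nonneg_left this (by positivity)
        exact mul_le_mul_of_nonneg_right h2 (Real.exp_pos _).le
      refine hxe.trans (le_of_eq ?_)
      ring
    have heq : ∫ x : ℝ, (2 * b' * MG) * (|x| * Real.exp (-b' * x ^ 2)) = 2 * MG := by
      rw [integral_const_mul, aux_integral_abs_gauss hb']
      field_simp
    calc |R lam| = ‖R lam‖ := (Real.norm_eq_abs _).symm
      _ ≤ 2 * MG := heq ▸ hle
  -- conclude
  have hlim0 : Tendsto (fun lam => Real.sqrt lam * R lam) (𝓝[>] 0) (𝓝 0) := by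
    apply squeeze_zero_norm' (a := fun lam => Real.sqrt lam * (2 * MG))
    · filter_upwards [self_mem_nhdsWithin] with lam hlam
      rw [norm_mul, Real.norm_eq_abs, Real.norm_eq_abs, abs_of_nonneg (Real.sqrt_nonneg _)]
      exact mul_le_mul_of_nonneg_left (hRbound lam hlam) (Real.sqrt_nonneg _)
    · have h1 : Tendsto Real.sqrt (𝓝[>] (0:ℝ)) (𝓝 0) := by
        have h2 : Tendsto Real.sqrt (𝓝 (0:ℝ)) (𝓝 (Real.sqrt 0)) := Real.continuous_sqrt.tendsto 0
        rw [Real.sqrt_zero] at h2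
        exact h2.mono_left (nhdsWithin_le_nhds (s := Ioi (0:ℝ)))
      simpa using h1.mul_const (2 * MG)
  have htend : Tendsto (fun lam => Real.sqrt (π / b) * c + Real.sqrt lam * R lam)
      (𝓝[>] 0) (𝓝 (Real.sqrt (π / b) * c)) := by
    simpa using tendsto_const_nhds.add hlim0
  apply htend.congr'
  filter_upwards [self_mem_nhdsWithin] with lam hlam
  exact (main lam hlam).symm

/-- Gaussian-damped `L^p` norms of a continuous `1`-periodic function converge, as
`λ → 0⁺`, to the corresponding `L^p` norm over one period:
`∫_ℝ λ^{1/2}|q(x)|^p e^{-pλx²} dx → √(π/p) ∫₀¹ |q(x)|^p dx`, and consequently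
`‖q_λ‖_{L^p(ℝ)} → (π/p)^{1/(2p)} ‖q‖_{L^p(0,1)}` for `q_λ(x) = λ^{1/(2p)} q(x) e^{-λx²}`. -/
theorem gaussian_damped_periodic_Lp_limit
    (q : ℝ → ℂ) (hq : Continuous q) (hper : ∀ x : ℝ, q (x + 1) = q x)
    (p : ℝ) (hp : 1 ≤ p) :
    Tendsto (fun lam : ℝ =>
        ∫ x : ℝ, lam ^ ((1 : ℝ) / 2) * ‖q x‖ ^ p * Real.exp (-(p * lam * x ^ 2)))
      (𝓝[>] 0)
      (𝓝 (Real.sqrt (Real.pi / p) * ∫ x in (0 : ℝ)..1, ‖q x‖ ^ p)) ∧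
    Tendsto (fun lam : ℝ =>
        (∫ x : ℝ, ‖(↑(lam ^ (1 / (2 * p))) : ℂ) * q x * (↑(Real.exp (-(lam * x ^ 2))) : ℂ)‖ ^ p)
          ^ (1 / p))
      (𝓝[>] 0)
      (𝓝 ((Real.pi / p) ^ (1 / (2 * p)) * (∫ x in (0 : ℝ)..1, ‖q x‖ ^ p) ^ (1 / p))) := by
  have hp0 : (0:ℝ) < p := lt_of_lt_of_le one_pos hp
  have hpne : p ≠ 0 := hp0.ne'
  set f : ℝ → ℝ := fun x => ‖q x‖ ^ p with hfdef
  have hfc : Continuous f :=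
    (hq.norm).rpow_const fun x => Or.inr hp0.le
  have hfper : Function.Periodic f 1 := fun x => by simp [hfdef, hper x]
  have key := aux_key f hfc hfper p hp0
  -- first part
  have h1 : Tendsto (fun lam : ℝ =>
      ∫ x : ℝ, lam ^ ((1 : ℝ) / 2) * ‖q x‖ ^ p * Real.exp (-(p * lam * x ^ 2)))
      (𝓝[>] 0)
      (𝓝 (Real.sqrt (Real.pi / p) * ∫ x in (0 : ℝ)..1, ‖q x‖ ^ p)) := by
    apply key.congr'
    filter_upwards [self_mem_nhdsWithin] with lam hlam
    have hlam' : (0:ℝ) < lam := hlam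
    rw [← integral_const_mul]
    apply integral_congr_ae
    refine Eventually.of_forall fun x => ?_
    beta_reduce
    rw [Real.sqrt_eq_rpow, show -(p * lam) * x ^ 2 = -(p * lam * x ^ 2) by ring]
    ring
  refine ⟨h1, ?_⟩
  -- second part
  have hC : 0 ≤ ∫ x in (0:ℝ)..1, ‖q x‖ ^ p :=
    intervalIntegral.integral_nonneg zero_le_one fun x _ => Real.rpow_nonneg (norm_nonneg _) p
  have h2 := h1.rpow_const (p := 1 / p) (Or.inr (by positivity))
  have hval : (Real.sqrt (Real.pi / p) * ∫ x in (0:ℝ)..1, ‖q x‖ ^ p) ^ ((1:ℝ) / p)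
      = (Real.pi / p) ^ (1 / (2 * p)) * (∫ x in (0:ℝ)..1, ‖q x‖ ^ p) ^ (1 / p) := by
    rw [Real.mul_rpow (Real.sqrt_nonneg _) hC, Real.sqrt_eq_rpow,
      ← Real.rpow_mul (by positivity : (0:ℝ) ≤ Real.pi / p),
      show (1/2 : ℝ) * (1/p) = 1 / (2 * p) by ring]
  rw [hval] at h2
  apply h2.congr'
  filter_upwards [self_mem_nhdsWithin] with lam hlam
  have hlam' : (0:ℝ) < lam := hlam
  congr 1
  apply integral_congr_ae
  refine Eventually.of_forall fun x => ?_
  beta_reduce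
  have hx : ‖(↑(lam ^ (1 / (2 * p))) : ℂ) * q x * (↑(Real.exp (-(lam * x ^ 2))) : ℂ)‖
      = lam ^ (1 / (2 * p)) * ‖q x‖ * Real.exp (-(lam * x ^ 2)) := by
    rw [norm_mul, norm_mul, Complex.norm_real, Complex.norm_real, Real.norm_eq_abs,
      Real.norm_eq_abs, abs_of_nonneg (Real.rpow_nonneg hlam'.le _),
      abs_of_nonneg (Real.exp_pos _).le]
  rw [hx, Real.mul_rpow (by positivity) (Real.exp_pos _).le,
    Real.mul_rpow (by positivity) (norm_nonneg _),
    ← Real.rpow_mul hlam'.le, show (1 / (2 * p)) * p = (1:ℝ)/2 by field_simp,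
    ← Real.exp_mul, show -(lam * x ^ 2) * p = -(p * lam * x ^ 2) by ring]
end
end

section
/- (Failure of the upper majorant property transfers from the torus to the line.) Let p ∈ (2, ∞). Suppose there exist trigonometric polynomials q(x) = Σ_{|k| ≤ K} a_k e^{2πikx} and Q(x) = Σ_{|k| ≤ K} b_k e^{2πikx} with b_k ≥ 0 and |a_k| ≤ b_k for all k, such that ‖q‖_{L^p(0,1)} > ‖Q‖_{L^p(0,1)}. Then there exist Schwartz functions f, g : ℝ → ℂ with |f̂(ξ)| ≤ ĝ(ξ) for all ξ ∈ ℝ and ‖f‖_{L^p(ℝ)} > ‖g‖_{L^p(ℝ)}. In particular, f and g can be taken of the form f(x) = q(x) e^{−λx²}, g(x) = Q(x) e^{−λx²} for all sufficiently small λ > 0. -/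
open MeasureTheory Complex SchwartzMap Real
open scoped FourierTransform

noncomputable section



lemma abs_pow_mul_gauss_le (i : ℕ) (x : ℝ) :
    |x| ^ i * Real.exp (-(x ^ 2 / 2)) ≤ i.factorial * Real.exp (1/2) := by
  have h1 : |x| ^ i ≤ i.factorial * Real.exp |x| := by
    have h := Real.pow_div_factorial_le_exp (x := |x|) (abs_nonneg x) i
    rw [div_le_iff₀ (by positivity)] at h
    linarith [h]
  have h2 : Real.exp |x| * Real.exp (-(x ^ 2 / 2)) ≤ Real.exp (1/2) := by
    rw [← Real.exp_add]
    apply Real.exp_le_exp.mpr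
    nlinarith [sq_nonneg (|x| - 1), _root_.sq_abs x]
  calc |x| ^ i * Real.exp (-(x ^ 2 / 2))
      ≤ (i.factorial * Real.exp |x|) * Real.exp (-(x ^ 2 / 2)) := by
        gcongr
    _ = i.factorial * (Real.exp |x| * Real.exp (-(x ^ 2 / 2))) := by ring
    _ ≤ i.factorial * Real.exp (1/2) := by
        have : (1:ℝ) ≤ i.factorial := by exact_mod_cast Nat.one_le_iff_ne_zero.mpr (Nat.factorial_ne_zero i)
        nlinarith [Real.exp_pos (1/2:ℝ), h2]

lemma poly_mul_gauss_bound (P : Polynomial ℝ) : ∃ C, ∀ x : ℝ,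
    |Polynomial.eval x P| * Real.exp (-(x ^ 2 / 2)) ≤ C := by
  refine ⟨∑ i ∈ Finset.range (P.natDegree + 1), |P.coeff i| * (i.factorial * Real.exp (1/2)),
    fun x => ?_⟩
  have h1 : |Polynomial.eval x P| ≤ ∑ i ∈ Finset.range (P.natDegree + 1), |P.coeff i| * |x| ^ i := by
    rw [Polynomial.eval_eq_sum_range]
    refine (Finset.abs_sum_le_sum_abs _ _).trans ?_
    apply Finset.sum_le_sum
    intro i _
    rw [abs_mul, _root_.abs_pow]
  calc |Polynomial.eval x P| * Real.exp (-(x ^ 2 / 2))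
      ≤ (∑ i ∈ Finset.range (P.natDegree + 1), |P.coeff i| * |x| ^ i) * Real.exp (-(x ^ 2 / 2)) := by
        gcongr
    _ = ∑ i ∈ Finset.range (P.natDegree + 1), |P.coeff i| * (|x| ^ i * Real.exp (-(x ^ 2 / 2))) := by
        rw [Finset.sum_mul]; apply Finset.sum_congr rfl; intro i _; ring
    _ ≤ _ := by
        apply Finset.sum_le_sum
        intro i _
        exact mul_le_mul_of_nonneg_left (abs_pow_mul_gauss_le i x) (abs_nonneg _)

/-- The standard gaussian as a Schwartz function. -/
def gauss₀ : SchwartzMap ℝ ℝ := by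
  refine SchwartzMap.mk (fun x => Real.exp (-(x ^ 2 / 2))) ?_ ?_
  · have h : ContDiff ℝ ⊤ (fun x : ℝ => -(x ^ 2 / 2)) := (((contDiff_id.pow 2).div_const 2).neg)
    exact h.exp.of_le le_top
  · intro k n
    obtain ⟨C, hC⟩ := poly_mul_gauss_bound
      (Polynomial.X ^ k * (Polynomial.hermite n).map (Int.castRingHom ℝ))
    refine ⟨C, fun x => ?_⟩
    have key := hC x
    rw [Polynomial.eval_mul, Polynomial.eval_pow, Polynomial.eval_X, abs_mul, _root_.abs_pow] at key
    rw [norm_iteratedFDeriv_eq_norm_iteratedDeriv, iteratedDeriv_eq_iterate,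
      Polynomial.deriv_gaussian_eq_hermite_mul_gaussian]
    have haev : (Polynomial.aeval x) (Polynomial.hermite n)
        = Polynomial.eval x ((Polynomial.hermite n).map (Int.castRingHom ℝ)) := by
      rw [Polynomial.eval_map, Polynomial.aeval_def]
      rfl
    calc ‖x‖ ^ k * ‖(-1:ℝ) ^ n * (Polynomial.aeval x) (Polynomial.hermite n)
          * Real.exp (-(x ^ 2 / 2))‖
        = |x| ^ k * (|Polynomial.eval x ((Polynomial.hermite n).map (Int.castRingHom ℝ))|
            * Real.exp (-(x ^ 2 / 2))) := by
          rw [Real.norm_eq_abs, Real.norm_eq_abs, abs_mul, abs_mul, _root_.abs_pow, abs_neg, abs_one,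
            one_pow, one_mul, Real.abs_exp, haev]
      _ ≤ C := by rw [← mul_assoc]; exact key

@[simp] lemma gauss₀_apply (x : ℝ) : gauss₀ x = Real.exp (-(x ^ 2 / 2)) := rfl


/-- scaled gaussian Schwartz map -/
def gaussS (lam : ℝ) (hlam : 0 < lam) : SchwartzMap ℝ ℝ :=
  SchwartzMap.compCLMOfContinuousLinearEquiv ℝ
    ((LinearEquiv.smulOfNeZero ℝ ℝ (Real.sqrt (2 * lam))
      (by positivity)).toContinuousLinearEquiv) gauss₀

lemma gaussS_apply (lam : ℝ) (hlam : 0 < lam) (x : ℝ) :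
    gaussS lam hlam x = Real.exp (-(lam * x ^ 2)) := by
  have hs : Real.sqrt (2 * lam) ^ 2 = 2 * lam := Real.sq_sqrt (by positivity)
  show gauss₀ (Real.sqrt (2 * lam) • x) = _
  rw [gauss₀_apply]
  congr 1
  rw [smul_eq_mul, mul_pow, hs]
  ring


section TG
variable {E F : Type*} [NormedAddCommGroup E] [NormedSpace ℝ E]
  [NormedAddCommGroup F] [NormedSpace ℝ F]

lemma Function.HasTemperateGrowth.add' {f g : E → F} (hf : Function.HasTemperateGrowth f)
    (hg : Function.HasTemperateGrowth g) :
    Function.HasTemperateGrowth (fun x => f x + g x) := by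
  refine ⟨hf.1.add hg.1, fun n => ?_⟩
  obtain ⟨k₁, C₁, h₁⟩ := hf.2 n
  obtain ⟨k₂, C₂, h₂⟩ := hg.2 n
  have hC₁ : 0 ≤ C₁ := le_trans (by positivity) ((h₁ 0).trans_eq (by simp))
  have hC₂ : 0 ≤ C₂ := le_trans (by positivity) ((h₂ 0).trans_eq (by simp))
  refine ⟨max k₁ k₂, C₁ + C₂, fun x => ?_⟩
  have hx : (1:ℝ) ≤ 1 + ‖x‖ := by simp [norm_nonneg]
  have hiter : iteratedFDeriv ℝ n (fun x => f x + g x) x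
      = iteratedFDeriv ℝ n f x + iteratedFDeriv ℝ n g x :=
    iteratedFDeriv_add_apply (hf.1.contDiffAt.of_le (by exact_mod_cast le_top)) (hg.1.contDiffAt.of_le (by exact_mod_cast le_top))
  calc ‖iteratedFDeriv ℝ n (fun x => f x + g x) x‖
      ≤ ‖iteratedFDeriv ℝ n f x‖ + ‖iteratedFDeriv ℝ n g x‖ := by
        rw [hiter]; exact norm_add_le _ _
    _ ≤ C₁ * (1 + ‖x‖) ^ k₁ + C₂ * (1 + ‖x‖) ^ k₂ := add_le_add (h₁ x) (h₂ x)
    _ ≤ C₁ * (1 + ‖x‖) ^ max k₁ k₂ + C₂ * (1 + ‖x‖) ^ max k₁ k₂ := by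
        gcongr <;> first | exact hx | simp
    _ = (C₁ + C₂) * (1 + ‖x‖) ^ max k₁ k₂ := by ring

lemma Function.HasTemperateGrowth.finsetSum {ι : Type*} (s : Finset ι) {f : ι → E → F}
    (hf : ∀ i ∈ s, Function.HasTemperateGrowth (f i)) :
    Function.HasTemperateGrowth (fun x => ∑ i ∈ s, f i x) := by
  classical
  induction s using Finset.induction with
  | empty => simpa using Function.HasTemperateGrowth.zero
  | insert _ _ hi ih =>
    rename_i j t
    simp only [Finset.sum_insert hi]
    exact (hf j (Finset.mem_insert_self j t)).add'
      (ih fun i his => hf i (Finset.mem_insert_of_mem his))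

end TG

lemma iteratedDeriv_const_cexp_real (c μ : ℂ) (n : ℕ) :
    iteratedDeriv n (fun x : ℝ => c * Complex.exp (μ * x))
      = fun x : ℝ => c * μ ^ n * Complex.exp (μ * x) := by
  induction n with
  | zero => simp
  | succ n ih =>
    rw [iteratedDeriv_succ, ih]
    funext x
    have h0 : HasDerivAt (fun x : ℝ => μ * (x:ℂ)) μ x := by
      simpa using (Complex.ofRealCLM.hasDerivAt (x := x)).const_mul μ
    have h : HasDerivAt (fun x : ℝ => c * μ ^ n * Complex.exp (μ * x))
        (c * μ ^ n * (Complex.exp (μ * x) * μ)) x := HasDerivAt.const_mul (c * μ ^ n) (h0.cexp)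
    rw [h.deriv]
    ring

lemma contDiff_const_cexp_real (c μ : ℂ) :
    ContDiff ℝ ⊤ (fun x : ℝ => c * Complex.exp (μ * x)) := by
  apply ContDiff.mul contDiff_const
  apply Complex.contDiff_exp.comp
  have : (fun x : ℝ => μ * (x:ℂ)) = fun x : ℝ => μ • Complex.ofRealCLM x := by
    funext x; simp [smul_eq_mul]
  rw [this]
  exact (Complex.ofRealCLM.contDiff).const_smul μ

lemma hasTemperateGrowth_term (c : ℂ) (t : ℝ) :
    Function.HasTemperateGrowth (fun x : ℝ => c * Complex.exp (((t : ℂ) * Complex.I) * x)) := by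
  refine ⟨(contDiff_const_cexp_real c _).of_le le_top, fun n => ?_⟩
  refine ⟨0, ‖c‖ * |t| ^ n, fun x => ?_⟩
  rw [norm_iteratedFDeriv_eq_norm_iteratedDeriv, iteratedDeriv_const_cexp_real]
  have habs : ‖Complex.exp ((t : ℂ) * Complex.I * x)‖ = 1 := by
    rw [Complex.norm_exp]
    simp
  rw [pow_zero, mul_one]
  calc ‖c * ((t:ℂ) * Complex.I) ^ n * Complex.exp ((t : ℂ) * Complex.I * x)‖
      = ‖c‖ * ‖(t:ℂ) * Complex.I‖ ^ n * 1 := by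
        rw [norm_mul, norm_mul, norm_pow, show ‖Complex.exp ((t:ℂ) * Complex.I * x)‖ = 1 from habs]
    _ ≤ ‖c‖ * |t| ^ n := by
        rw [mul_one, norm_mul, Complex.norm_I, mul_one, Complex.norm_real, Real.norm_eq_abs]


section Core
variable {D : ℝ → ℝ} {M a : ℝ}

lemma piece_bound (hD : Continuous D) (hper : Function.Periodic D 1)
    (hM : ∀ x, |D x| ≤ M) (ha : 0 < a) (i : ℕ) :
    (∫ x in (0:ℝ)..1, D x) * Real.exp (-a * ((i:ℝ)+1)^2)
      - M * (Real.exp (-a * (i:ℝ)^2) - Real.exp (-a * ((i:ℝ)+1)^2))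
    ≤ ∫ x in (i:ℝ)..(i:ℝ)+1, D x * Real.exp (-a * x^2) := by
  have hM0 : 0 ≤ M := le_trans (abs_nonneg _) (hM 0)
  set c : ℝ := Real.exp (-a * ((i:ℝ)+1)^2) with hc
  set u : ℝ := Real.exp (-a * (i:ℝ)^2) with hu
  have hw : ∀ x ∈ Set.uIoc (i:ℝ) ((i:ℝ)+1), c ≤ Real.exp (-a * x^2) ∧ Real.exp (-a * x^2) ≤ u := by
    intro x hx
    rw [Set.uIoc_of_le (by linarith : (i:ℝ) ≤ (i:ℝ)+1)] at hx
    obtain ⟨hx1, hx2⟩ := hx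
    have hxnn : (0:ℝ) ≤ x := le_trans (Nat.cast_nonneg i) hx1.le
    constructor
    · apply Real.exp_le_exp.mpr
      have : x^2 ≤ ((i:ℝ)+1)^2 := by nlinarith
      nlinarith
    · apply Real.exp_le_exp.mpr
      have : ((i:ℝ))^2 ≤ x^2 := by nlinarith
      nlinarith
  have hcw : Continuous (fun x : ℝ => Real.exp (-a * x^2)) :=
    Real.continuous_exp.comp (by fun_prop)
  have hsplit : ∫ x in (i:ℝ)..(i:ℝ)+1, D x * Real.exp (-a * x^2)
      = (∫ x in (i:ℝ)..(i:ℝ)+1, D x * c)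
        + ∫ x in (i:ℝ)..(i:ℝ)+1, D x * (Real.exp (-a * x^2) - c) := by
    rw [← intervalIntegral.integral_add (f := fun x => D x * c) (g := fun x => D x * (Real.exp (-a * x^2) - c)) ((hD.mul continuous_const : Continuous fun x => D x * c).intervalIntegrable _ _)
      ((hD.mul (hcw.sub continuous_const) : Continuous fun x => D x * (Real.exp (-a * x^2) - c)).intervalIntegrable _ _)]
    apply intervalIntegral.integral_congr
    intro x _
    simp only
    ring
  have hper' : ∫ x in (i:ℝ)..(i:ℝ)+1, D x = ∫ x in (0:ℝ)..1, D x := by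
    have := hper.intervalIntegral_add_eq (i:ℝ) 0
    simpa using this
  have hconst : ∫ x in (i:ℝ)..(i:ℝ)+1, D x * c = (∫ x in (0:ℝ)..1, D x) * c := by
    rw [intervalIntegral.integral_mul_const, hper']
  have herr : |∫ x in (i:ℝ)..(i:ℝ)+1, D x * (Real.exp (-a * x^2) - c)| ≤ M * (u - c) := by
    have h := intervalIntegral.norm_integral_le_of_norm_le_const
      (C := M * (u - c)) (f := fun x => D x * (Real.exp (-a * x^2) - c))
      (a := (i:ℝ)) (b := (i:ℝ)+1) ?_
    · simpa using h
    · intro x hx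
      obtain ⟨h1, h2⟩ := hw x hx
      rw [Real.norm_eq_abs, abs_mul, _root_.abs_of_nonneg (by linarith : (0:ℝ) ≤ Real.exp (-a * x^2) - c)]
      have := hM x
      have h3 : Real.exp (-a * x^2) - c ≤ u - c := by linarith
      nlinarith [abs_nonneg (D x)]
  rw [hsplit, hconst]
  have := abs_le.mp herr
  linarith [this.1]

lemma half_line_bound (hD : Continuous D) (hper : Function.Periodic D 1)
    (hM : ∀ x, |D x| ≤ M) (ha : 0 < a)
    (hΔ : 0 ≤ ∫ x in (0:ℝ)..1, D x) (N k : ℕ) (hk : N + 1 ≤ k) :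
    (∫ x in (0:ℝ)..1, D x) * ((N+1) * Real.exp (-a * ((N:ℝ)+1)^2)) - M
    ≤ ∫ x in (0:ℝ)..(k:ℝ), D x * Real.exp (-a * x^2) := by
  have hM0 : 0 ≤ M := le_trans (abs_nonneg _) (hM 0)
  set Δ : ℝ := ∫ x in (0:ℝ)..1, D x with hΔdef
  have hcont : Continuous (fun x => D x * Real.exp (-a * x^2)) :=
    hD.mul (Real.continuous_exp.comp (by fun_prop))
  have hsum : ∑ i ∈ Finset.range k, ∫ x in ((i:ℕ):ℝ)..((i+1:ℕ):ℝ), D x * Real.exp (-a * x^2)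
      = ∫ x in ((0:ℕ):ℝ)..((k:ℕ):ℝ), D x * Real.exp (-a * x^2) :=
    intervalIntegral.sum_integral_adjacent_intervals (a := fun n : ℕ => (n:ℝ))
      (fun j _ => hcont.intervalIntegrable _ _)
  have hterm : ∀ i : ℕ, Δ * Real.exp (-a * ((i:ℝ)+1)^2)
      - M * (Real.exp (-a * (i:ℝ)^2) - Real.exp (-a * ((i:ℝ)+1)^2))
      ≤ ∫ x in ((i:ℕ):ℝ)..((i+1:ℕ):ℝ), D x * Real.exp (-a * x^2) := by
    intro i
    have := piece_bound hD hper hM ha i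
    have hcast : ((i+1:ℕ):ℝ) = (i:ℝ)+1 := by push_cast; ring
    rw [hcast]
    exact this
  have htel : ∑ i ∈ Finset.range k,
      (Real.exp (-a * (i:ℝ)^2) - Real.exp (-a * ((i:ℝ)+1)^2))
      = 1 - Real.exp (-a * (k:ℝ)^2) := by
    have := Finset.sum_range_sub' (f := fun i : ℕ => Real.exp (-a * (i:ℝ)^2)) k
    rw [show (∑ i ∈ Finset.range k, (Real.exp (-a * (i:ℝ)^2) - Real.exp (-a * ((i:ℝ)+1)^2)))
      = ∑ i ∈ Finset.range k, (Real.exp (-a * (i:ℝ)^2) - Real.exp (-a * (((i+1:ℕ)):ℝ)^2)) from ?_, this]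
    · norm_num
    · apply Finset.sum_congr rfl; intro i _; push_cast; ring_nf
  have hsum_u : (N+1 : ℝ) * Real.exp (-a * ((N:ℝ)+1)^2)
      ≤ ∑ i ∈ Finset.range k, Real.exp (-a * ((i:ℝ)+1)^2) := by
    calc (N+1 : ℝ) * Real.exp (-a * ((N:ℝ)+1)^2)
        = ∑ _i ∈ Finset.range (N+1), Real.exp (-a * ((N:ℝ)+1)^2) := by
          rw [Finset.sum_const, Finset.card_range, nsmul_eq_mul]; push_cast; ring
      _ ≤ ∑ i ∈ Finset.range (N+1), Real.exp (-a * ((i:ℝ)+1)^2) := by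
          apply Finset.sum_le_sum
          intro i hi
          apply Real.exp_le_exp.mpr
          have hi' : (i:ℝ) + 1 ≤ (N:ℝ) + 1 := by
            have := Finset.mem_range.mp hi
            have : (i:ℝ) ≤ (N:ℝ) := by exact_mod_cast Nat.lt_succ_iff.mp this
            linarith
          have hsq : ((i:ℝ)+1)^2 ≤ ((N:ℝ)+1)^2 := by nlinarith [Nat.cast_nonneg (α := ℝ) i]
          nlinarith [hsq, ha.le]
      _ ≤ ∑ i ∈ Finset.range k, Real.exp (-a * ((i:ℝ)+1)^2) := by
          apply Finset.sum_le_sum_of_subset_of_nonneg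
          · exact Finset.range_subset_range.mpr hk
          · intro i _ _; positivity
  calc Δ * ((N+1) * Real.exp (-a * ((N:ℝ)+1)^2)) - M
      ≤ Δ * (∑ i ∈ Finset.range k, Real.exp (-a * ((i:ℝ)+1)^2))
        - M * (1 - Real.exp (-a * (k:ℝ)^2)) := by
        have h1 : Δ * ((N+1) * Real.exp (-a * ((N:ℝ)+1)^2))
            ≤ Δ * (∑ i ∈ Finset.range k, Real.exp (-a * ((i:ℝ)+1)^2)) :=
          mul_le_mul_of_nonneg_left hsum_u hΔ
        have h2 : M * (1 - Real.exp (-a * (k:ℝ)^2)) ≤ M := by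
          nlinarith [Real.exp_pos (-a * (k:ℝ)^2)]
        linarith
    _ = ∑ i ∈ Finset.range k, (Δ * Real.exp (-a * ((i:ℝ)+1)^2)
          - M * (Real.exp (-a * (i:ℝ)^2) - Real.exp (-a * ((i:ℝ)+1)^2))) := by
        rw [Finset.sum_sub_distrib, ← Finset.mul_sum, ← Finset.mul_sum, htel]
    _ ≤ ∑ i ∈ Finset.range k, ∫ x in ((i:ℕ):ℝ)..((i+1:ℕ):ℝ), D x * Real.exp (-a * x^2) :=
        Finset.sum_le_sum fun i _ => hterm i
    _ = ∫ x in (0:ℝ)..(k:ℝ), D x * Real.exp (-a * x^2) := by rw [hsum]; norm_num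
end Core

section Core
variable {D : ℝ → ℝ} {M a : ℝ}


lemma line_bound (hD : Continuous D) (hper : Function.Periodic D 1)
    (hM : ∀ x, |D x| ≤ M) (ha : 0 < a)
    (hΔ : 0 ≤ ∫ x in (0:ℝ)..1, D x) (N : ℕ) :
    (∫ x in (0:ℝ)..1, D x) * (2 * ((N:ℝ)+1) * Real.exp (-a * ((N:ℝ)+1)^2)) - 2 * M
    ≤ ∫ x : ℝ, D x * Real.exp (-a * x^2) := by
  set Δ : ℝ := ∫ x in (0:ℝ)..1, D x with hΔdef
  have hcont : Continuous (fun x => D x * Real.exp (-a * x^2)) :=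
    hD.mul (Real.continuous_exp.comp (by fun_prop))
  have hInt : Integrable (fun x => D x * Real.exp (-a * x^2)) := by
    apply Integrable.bdd_mul (integrable_exp_neg_mul_sq ha) hD.aestronglyMeasurable
    exact Filter.Eventually.of_forall (fun x => by rw [Real.norm_eq_abs]; exact hM x)
  have hT : Filter.Tendsto (fun k : ℕ => ∫ x in (-(k:ℝ))..(k:ℝ), D x * Real.exp (-a * x^2))
      Filter.atTop (nhds (∫ x : ℝ, D x * Real.exp (-a * x^2))) :=
    intervalIntegral_tendsto_integral hInt
      (Filter.tendsto_neg_atTop_atBot.comp tendsto_natCast_atTop_atTop) tendsto_natCast_atTop_atTop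
  apply ge_of_tendsto hT
  filter_upwards [Filter.eventually_ge_atTop (N+1)] with k hk
  -- D ∘ neg
  set D' : ℝ → ℝ := fun x => D (-x) with hD'def
  have hD'c : Continuous D' := hD.comp continuous_neg
  have hper' : Function.Periodic D' 1 := by
    intro x
    show D (-(x+1)) = D (-x)
    have := hper.sub_eq (-x)
    rw [← this]
    ring_nf
  have hM' : ∀ x, |D' x| ≤ M := fun x => hM (-x)
  have hΔ' : ∫ x in (0:ℝ)..1, D' x = Δ := by
    rw [hD'def]
    rw [intervalIntegral.integral_comp_neg D]
    have h2 := hper.intervalIntegral_add_eq (-1 : ℝ) 0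
    norm_num at h2 ⊢
    rw [h2]
  have hsplit : ∫ x in (-(k:ℝ))..(k:ℝ), D x * Real.exp (-a * x^2)
      = (∫ x in (-(k:ℝ))..(0:ℝ), D x * Real.exp (-a * x^2))
        + ∫ x in (0:ℝ)..(k:ℝ), D x * Real.exp (-a * x^2) :=
    (intervalIntegral.integral_add_adjacent_intervals (hcont.intervalIntegrable _ _)
      (hcont.intervalIntegrable _ _)).symm
  have hneg : ∫ x in (-(k:ℝ))..(0:ℝ), D x * Real.exp (-a * x^2)
      = ∫ x in (0:ℝ)..(k:ℝ), D' x * Real.exp (-a * x^2) := by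
    have := intervalIntegral.integral_comp_neg (fun x => D x * Real.exp (-a * x^2))
      (a := 0) (b := (k:ℝ))
    rw [show ∫ x in (0:ℝ)..(k:ℝ), D' x * Real.exp (-a * x^2)
      = ∫ x in (0:ℝ)..(k:ℝ), (fun y => D y * Real.exp (-a * y^2)) (-x) from ?_, this]
    · norm_num
    · apply intervalIntegral.integral_congr
      intro x _
      simp only [hD'def]
      ring_nf
  have h1 := half_line_bound hD hper hM ha hΔ N k hk
  have h2 := half_line_bound hD'c hper' hM' ha (by rw [hΔ']; exact hΔ) N k hk
  rw [hΔ'] at h2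
  rw [hsplit, hneg]
  have : Δ * (2 * ((N:ℝ)+1) * Real.exp (-a * ((N:ℝ)+1)^2)) - 2*M
      = (Δ * (((N:ℝ)+1) * Real.exp (-a * ((N:ℝ)+1)^2)) - M)
        + (Δ * (((N:ℝ)+1) * Real.exp (-a * ((N:ℝ)+1)^2)) - M) := by ring
  rw [this]
  exact add_le_add h2 h1
end Core

section Core
variable {D : ℝ → ℝ} {M : ℝ}


lemma line_pos (hD : Continuous D) (hper : Function.Periodic D 1)
    (hM : ∀ x, |D x| ≤ M) (hΔpos : 0 < ∫ x in (0:ℝ)..1, D x) :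
    ∃ A : ℝ, 0 < A ∧ ∀ a : ℝ, 0 < a → a < A → 0 < ∫ x : ℝ, D x * Real.exp (-a * x^2) := by
  set Δ : ℝ := ∫ x in (0:ℝ)..1, D x with hΔdef
  have hM0 : 0 ≤ M := le_trans (abs_nonneg _) (hM 0)
  set N : ℕ := Nat.ceil (2 * M / Δ) with hN
  have hkey : 2 * M + Δ ≤ Δ * ((N:ℝ) + 1) := by
    have h1 : 2 * M / Δ ≤ (N:ℝ) := Nat.le_ceil _
    have h2 : 2 * M ≤ Δ * (N:ℝ) := by
      rw [div_le_iff₀ hΔpos] at h1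
      linarith [h1]
    nlinarith
  refine ⟨Real.log 2 / ((N:ℝ)+1)^2, by positivity, fun a ha haA => ?_⟩
  have he : (1/2 : ℝ) ≤ Real.exp (-a * ((N:ℝ)+1)^2) := by
    have h1 : a * ((N:ℝ)+1)^2 < Real.log 2 := by
      rw [lt_div_iff₀ (by positivity : (0:ℝ) < ((N:ℝ)+1)^2)] at haA
      linarith [haA]
    have : Real.exp (-Real.log 2) ≤ Real.exp (-a * ((N:ℝ)+1)^2) := by
      apply Real.exp_le_exp.mpr; linarith
    rw [Real.exp_neg, Real.exp_log (by norm_num : (0:ℝ) < 2)] at this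
    rw [one_div]
    exact this
  have hb := line_bound hD hper hM ha hΔpos.le N
  have : Δ ≤ Δ * (2 * ((N:ℝ)+1) * Real.exp (-a * ((N:ℝ)+1)^2)) - 2 * M := by
    have h3 : Δ * ((N:ℝ)+1) ≤ Δ * (2 * ((N:ℝ)+1) * Real.exp (-a * ((N:ℝ)+1)^2)) := by
      nlinarith [hΔpos.le, Nat.cast_nonneg (α := ℝ) N]
    linarith
  linarith
end Core


/-- The Fourier transform of the periodized gaussian bump. -/
def Gl (lam u : ℝ) : ℝ := (1 / (lam/Real.pi) ^ ((1:ℝ)/2)) * Real.exp (-(Real.pi/(lam/Real.pi)) * u^2)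

lemma Gl_pos (lam u : ℝ) (hlam : 0 < lam) : 0 < Gl lam u := by
  have : (0:ℝ) < lam / Real.pi := div_pos hlam Real.pi_pos
  unfold Gl
  positivity

lemma term_eq (lam : ℝ) (k : ℤ) (x : ℝ) :
    Complex.exp (((2 * Real.pi * (k:ℝ) * x : ℝ):ℂ) * Complex.I) * (Real.exp (-(lam * x^2)) : ℝ)
    = Complex.exp (-(Real.pi:ℂ) * ((lam/Real.pi : ℝ):ℂ) * (x:ℂ)^2
        + 2 * (Real.pi:ℂ) * (Complex.I * (k:ℂ)) * (x:ℂ)) := by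
  rw [show ((Real.exp (-(lam * x^2)) : ℝ) : ℂ) = Complex.exp ((-(lam * x^2) : ℝ) : ℂ) from
    Complex.ofReal_exp _, ← Complex.exp_add]
  congr 1
  have hπ : (Real.pi : ℂ) ≠ 0 := Complex.ofReal_ne_zero.mpr Real.pi_ne_zero
  field_simp
  push_cast
  field_simp
  ring

lemma fourier_term (lam : ℝ) (hlam : 0 < lam) (k : ℤ) (ξ : ℝ) :
    𝓕 (fun x : ℝ => Complex.exp (-(Real.pi:ℂ) * ((lam/Real.pi : ℝ):ℂ) * (x:ℂ)^2
        + 2 * (Real.pi:ℂ) * (Complex.I * (k:ℂ)) * (x:ℂ))) ξ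
    = (Gl lam (ξ - k) : ℝ) := by
  have hb : (0:ℝ) < lam / Real.pi := div_pos hlam Real.pi_pos
  have hbre : (0:ℂ).re < (((lam/Real.pi : ℝ)):ℂ).re := by
    simpa using hb
  have h := congrFun (fourier_gaussian_pi' (b := ((lam/Real.pi : ℝ):ℂ))
    (by simpa using hb) (Complex.I * (k:ℂ))) ξ
  rw [h]
  have h2 : ((ξ:ℂ) + Complex.I * (Complex.I * (k:ℂ)))^2 = (((ξ - k : ℝ)):ℂ)^2 := by
    have hI : Complex.I * (Complex.I * (k:ℂ)) = -(k:ℂ) := by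
      rw [← mul_assoc, Complex.I_mul_I]; ring
    rw [hI]; push_cast; ring
  rw [h2]
  have h3 : (((lam/Real.pi : ℝ)):ℂ) ^ (1/2 : ℂ) = ((( (lam/Real.pi) ^ ((1:ℝ)/2) : ℝ)):ℂ) := by
    rw [Complex.ofReal_cpow hb.le]
    norm_num
  rw [h3]
  have h4 : -(Real.pi:ℂ) / (((lam/Real.pi : ℝ)):ℂ) * (((ξ - k : ℝ)):ℂ)^2
      = ((-(Real.pi/(lam/Real.pi)) * (ξ - k)^2 : ℝ) : ℂ) := by
    push_cast
    ring
  rw [h4, ← Complex.ofReal_exp]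
  unfold Gl
  push_cast
  ring


lemma fourier_sum (lam : ℝ) (hlam : 0 < lam) (c : ℤ → ℂ) (s : Finset ℤ) (ξ : ℝ) :
    𝓕 (fun x : ℝ => (∑ k ∈ s, c k * Complex.exp (((2 * Real.pi * (k:ℝ) * x : ℝ):ℂ) * Complex.I))
        * (Real.exp (-(lam * x^2)) : ℝ)) ξ
    = ∑ k ∈ s, c k * (Gl lam (ξ - k) : ℝ) := by
  have hπ : (Real.pi : ℂ) ≠ 0 := Complex.ofReal_ne_zero.mpr Real.pi_ne_zero
  set T : ℤ → ℝ → ℂ := fun k x => Complex.exp (-(Real.pi:ℂ) * ((lam/Real.pi : ℝ):ℂ) * (x:ℂ)^2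
        + 2 * (Real.pi:ℂ) * (Complex.I * (k:ℂ)) * (x:ℂ)) with hT
  have hfun : (fun x : ℝ => (∑ k ∈ s, c k
        * Complex.exp (((2 * Real.pi * (k:ℝ) * x : ℝ):ℂ) * Complex.I))
        * (Real.exp (-(lam * x^2)) : ℝ)) = fun x => ∑ k ∈ s, c k * T k x := by
    funext x
    rw [Finset.sum_mul]
    apply Finset.sum_congr rfl
    intro k _
    rw [mul_assoc, term_eq lam k x]
  rw [hfun, Real.fourier_real_eq_integral_exp_smul]
  have hint : ∀ k : ℤ, Integrable (fun v : ℝ =>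
      Complex.exp (((-2 * Real.pi * v * ξ : ℝ):ℂ) * Complex.I) • (c k * T k v)) := by
    intro k
    have hq := integrable_cexp_quadratic (b := (lam:ℂ)) (by simpa using hlam)
      (2 * (Real.pi:ℂ) * (Complex.I * (k:ℂ)) - 2 * (Real.pi:ℂ) * (ξ:ℂ) * Complex.I) 0
    have h2 := hq.const_mul (c k)
    apply h2.congr
    apply Filter.Eventually.of_forall
    intro v
    show c k * _ = _ • (c k * T k v)
    rw [smul_eq_mul, hT]
    simp only
    have hcomb : ∀ B C : ℂ, Complex.exp B * (c k * Complex.exp C) = c k * Complex.exp (B + C) := by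
      intro B C; rw [Complex.exp_add]; ring
    rw [hcomb]
    congr 1
    congr 1
    push_cast
    field_simp
    ring
  have hsplit : (fun v : ℝ => Complex.exp (((-2 * Real.pi * v * ξ : ℝ):ℂ) * Complex.I)
      • ∑ k ∈ s, c k * T k v)
      = fun v => ∑ k ∈ s, Complex.exp (((-2 * Real.pi * v * ξ : ℝ):ℂ) * Complex.I)
        • (c k * T k v) := by
    funext v
    rw [smul_eq_mul, Finset.mul_sum]
    apply Finset.sum_congr rfl
    intro k _
    rw [smul_eq_mul]
  rw [hsplit, integral_finset_sum s (fun k _ => hint k)]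
  apply Finset.sum_congr rfl
  intro k _
  have hpull : (fun v : ℝ => Complex.exp (((-2 * Real.pi * v * ξ : ℝ):ℂ) * Complex.I)
      • (c k * T k v))
      = fun v => c k * (Complex.exp (((-2 * Real.pi * v * ξ : ℝ):ℂ) * Complex.I) • T k v) := by
    funext v
    rw [smul_eq_mul, smul_eq_mul]
    ring
  rw [hpull, MeasureTheory.integral_const_mul]
  congr 1
  rw [← fourier_term lam hlam k ξ, Real.fourier_real_eq_integral_exp_smul]



/-! ### Glue lemmas -/

lemma periodic_bound {F : ℝ → ℝ} (hF : Continuous F) (hper : Function.Periodic F 1) :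
    ∃ C, ∀ x, |F x| ≤ C := by
  obtain ⟨C, hC⟩ := (isCompact_Icc (a := (0:ℝ)) (b := 1)).exists_bound_of_continuousOn
    hF.continuousOn
  refine ⟨C, fun x => ?_⟩
  obtain ⟨y, hy, hxy⟩ := hper.exists_mem_Ico₀ one_pos x
  rw [hxy, ← Real.norm_eq_abs]
  exact hC y ⟨hy.1, hy.2.le⟩

section TrigPoly

variable (c : ℤ → ℂ) (s : Finset ℤ)

lemma continuous_trigPoly :
    Continuous (fun x : ℝ => ∑ k ∈ s, c k
      * Complex.exp (((2 * Real.pi * (k:ℝ) * x : ℝ) : ℂ) * Complex.I)) := by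
  apply continuous_finset_sum
  intro k _
  apply continuous_const.mul
  apply Complex.continuous_exp.comp
  apply Continuous.mul ?_ continuous_const
  exact Complex.continuous_ofReal.comp (by continuity)

lemma periodic_trigPoly :
    Function.Periodic (fun x : ℝ => ∑ k ∈ s, c k
      * Complex.exp (((2 * Real.pi * (k:ℝ) * x : ℝ) : ℂ) * Complex.I)) 1 := by
  intro x
  apply Finset.sum_congr rfl
  intro k _
  congr 1
  have : ((2 * Real.pi * (k:ℝ) * (x+1) : ℝ) : ℂ) * Complex.I
      = ((2 * Real.pi * (k:ℝ) * x : ℝ) : ℂ) * Complex.I + (k:ℂ) * (2 * (Real.pi:ℂ) * Complex.I) := by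
    push_cast
    ring
  rw [this, Complex.exp_add, Complex.exp_int_mul_two_pi_mul_I, mul_one]

lemma htg_trigPoly :
    Function.HasTemperateGrowth (fun x : ℝ => ∑ k ∈ s, c k
      * Complex.exp (((2 * Real.pi * (k:ℝ) * x : ℝ) : ℂ) * Complex.I)) := by
  apply Function.HasTemperateGrowth.finsetSum
  intro k _
  have h : (fun x : ℝ => c k * Complex.exp (((2 * Real.pi * (k:ℝ) * x : ℝ) : ℂ) * Complex.I))
      = fun x : ℝ => c k * Complex.exp ((((2 * Real.pi * (k:ℝ) : ℝ)):ℂ) * Complex.I * (x:ℂ)) := by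
    funext x
    congr 2
    push_cast
    ring
  rw [h]
  exact hasTemperateGrowth_term (c k) (2 * Real.pi * (k:ℝ))

/-- The Schwartz function given by a trigonometric polynomial times a gaussian. -/
def trigGauss (lam : ℝ) (hlam : 0 < lam) : SchwartzMap ℝ ℂ :=
  SchwartzMap.bilinLeftCLM (ContinuousLinearMap.lsmul ℝ ℝ : ℝ →L[ℝ] ℂ →L[ℝ] ℂ)
    (htg_trigPoly c s) (gaussS lam hlam)

lemma trigGauss_apply (lam : ℝ) (hlam : 0 < lam) (x : ℝ) :
    trigGauss c s lam hlam x = (∑ k ∈ s, c k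
      * Complex.exp (((2 * Real.pi * (k:ℝ) * x : ℝ) : ℂ) * Complex.I))
      * ((Real.exp (-(lam * x ^ 2)) : ℝ) : ℂ) := by
  show (ContinuousLinearMap.lsmul ℝ ℝ : ℝ →L[ℝ] ℂ →L[ℝ] ℂ) (gaussS lam hlam x) _ = _
  rw [ContinuousLinearMap.lsmul_apply, gaussS_apply lam hlam x]
  rw [Complex.real_smul]
  ring

end TrigPoly

/-- Failure of the upper majorant property transfers from the torus to the line:
given trigonometric polynomials `q, Q` with `|a_k| ≤ b_k`, `b_k ≥ 0` and
`‖q‖_{L^p(0,1)} > ‖Q‖_{L^p(0,1)}` for some non-trivial exponent `p > 2`, the Schwartz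
functions `f = q e^{-λx²}`, `g = Q e^{-λx²}` satisfy `|f̂| ≤ ĝ` pointwise but
`‖f‖_{L^p(ℝ)} > ‖g‖_{L^p(ℝ)}`, for all sufficiently small `λ > 0`. -/
theorem ump_failure_transfers_to_real_line
    (p : ℝ) (hp : 2 < p)
    (K : ℕ) (a : ℤ → ℂ) (b : ℤ → ℝ)
    (hb : ∀ k : ℤ, 0 ≤ b k) (hab : ∀ k : ℤ, ‖a k‖ ≤ b k)
    (q Q : ℝ → ℂ)
    (hq : ∀ x : ℝ, q x = ∑ k ∈ Finset.Icc (-(K : ℤ)) (K : ℤ),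
      a k * Complex.exp (((2 * Real.pi * (k : ℝ) * x : ℝ) : ℂ) * Complex.I))
    (hQ : ∀ x : ℝ, Q x = ∑ k ∈ Finset.Icc (-(K : ℤ)) (K : ℤ),
      ((b k : ℝ) : ℂ) * Complex.exp (((2 * Real.pi * (k : ℝ) * x : ℝ) : ℂ) * Complex.I))
    (hgt : (∫ x in (0 : ℝ)..1, ‖Q x‖ ^ p) ^ (1 / p) < (∫ x in (0 : ℝ)..1, ‖q x‖ ^ p) ^ (1 / p)) :
    ∃ lam₀ : ℝ, 0 < lam₀ ∧ ∀ lam : ℝ, 0 < lam → lam < lam₀ →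
      ∃ f g : SchwartzMap ℝ ℂ,
        (∀ x : ℝ, f x = q x * (↑(Real.exp (-(lam * x ^ 2))) : ℂ)) ∧
        (∀ x : ℝ, g x = Q x * (↑(Real.exp (-(lam * x ^ 2))) : ℂ)) ∧
        (∀ ξ : ℝ, ‖𝓕 (⇑f) ξ‖ ≤ (𝓕 (⇑g) ξ).re ∧ (𝓕 (⇑g) ξ).im = 0) ∧
        (∫ x : ℝ, ‖g x‖ ^ p) ^ (1 / p) < (∫ x : ℝ, ‖f x‖ ^ p) ^ (1 / p) := by
  have hp0 : (0:ℝ) < p := by linarith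
  set s : Finset ℤ := Finset.Icc (-(K : ℤ)) (K : ℤ) with hs
  have hqfun : q = fun x : ℝ => ∑ k ∈ s, a k
      * Complex.exp (((2 * Real.pi * (k:ℝ) * x : ℝ) : ℂ) * Complex.I) := funext hq
  have hQfun : Q = fun x : ℝ => ∑ k ∈ s, ((b k : ℝ) : ℂ)
      * Complex.exp (((2 * Real.pi * (k:ℝ) * x : ℝ) : ℂ) * Complex.I) := funext hQ
  have hqc : Continuous q := by rw [hqfun]; exact continuous_trigPoly a s
  have hQc : Continuous Q := by rw [hQfun]; exact continuous_trigPoly _ s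
  have hqper : Function.Periodic q 1 := by
    rw [hqfun]; exact periodic_trigPoly a s
  have hQper : Function.Periodic Q 1 := by
    rw [hQfun]; exact periodic_trigPoly _ s
  set D : ℝ → ℝ := fun x => ‖q x‖ ^ p - ‖Q x‖ ^ p with hD
  have hqnc : Continuous fun x => ‖q x‖ ^ p := hqc.norm.rpow_const (fun x => Or.inr hp0.le)
  have hQnc : Continuous fun x => ‖Q x‖ ^ p := hQc.norm.rpow_const (fun x => Or.inr hp0.le)
  have hDc : Continuous D := hqnc.sub hQnc
  have hDper : Function.Periodic D 1 := by
    intro x; simp only [hD]; rw [hqper x, hQper x]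
  obtain ⟨M, hM⟩ := periodic_bound hDc hDper
  have hA0 : 0 ≤ ∫ x in (0:ℝ)..1, ‖Q x‖ ^ p :=
    intervalIntegral.integral_nonneg (by norm_num) (fun u _ => by positivity)
  have hB0 : 0 ≤ ∫ x in (0:ℝ)..1, ‖q x‖ ^ p :=
    intervalIntegral.integral_nonneg (by norm_num) (fun u _ => by positivity)
  have hAB : (∫ x in (0:ℝ)..1, ‖Q x‖ ^ p) < ∫ x in (0:ℝ)..1, ‖q x‖ ^ p := by
    by_contra hcon
    push_neg at hcon
    exact absurd (Real.rpow_le_rpow hB0 hcon (by positivity)) (not_lt.mpr · hgt)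
  have hΔ : ∫ x in (0:ℝ)..1, D x
      = (∫ x in (0:ℝ)..1, ‖q x‖ ^ p) - ∫ x in (0:ℝ)..1, ‖Q x‖ ^ p :=
    intervalIntegral.integral_sub (hqnc.intervalIntegrable _ _) (hQnc.intervalIntegrable _ _)
  have hΔpos : 0 < ∫ x in (0:ℝ)..1, D x := by rw [hΔ]; linarith
  obtain ⟨A₀, hA₀pos, hA₀⟩ := line_pos hDc hDper hM hΔpos
  refine ⟨A₀ / p, by positivity, fun lam hlam hlt => ?_⟩
  have ha : 0 < lam * p := by positivity
  have haA : lam * p < A₀ := by rwa [lt_div_iff₀ hp0] at hlt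
  refine ⟨trigGauss a s lam hlam, trigGauss (fun k => ((b k : ℝ) : ℂ)) s lam hlam, ?_, ?_, ?_, ?_⟩
  · intro x; rw [trigGauss_apply, hq x]
  · intro x; rw [trigGauss_apply, hQ x]
  · intro ξ
    have hcf : ⇑(trigGauss a s lam hlam) = fun x : ℝ => (∑ k ∈ s, a k
        * Complex.exp (((2 * Real.pi * (k:ℝ) * x : ℝ) : ℂ) * Complex.I))
        * ((Real.exp (-(lam * x ^ 2)) : ℝ) : ℂ) := funext (trigGauss_apply a s lam hlam)
    have hcg : ⇑(trigGauss (fun k => ((b k : ℝ) : ℂ)) s lam hlam)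
        = fun x : ℝ => (∑ k ∈ s, ((b k : ℝ) : ℂ)
        * Complex.exp (((2 * Real.pi * (k:ℝ) * x : ℝ) : ℂ) * Complex.I))
        * ((Real.exp (-(lam * x ^ 2)) : ℝ) : ℂ) :=
      funext (trigGauss_apply (fun k => ((b k : ℝ) : ℂ)) s lam hlam)
    rw [hcf, hcg, fourier_sum lam hlam a s ξ, fourier_sum lam hlam (fun k => ((b k : ℝ) : ℂ)) s ξ]
    have hgre : ∑ k ∈ s, ((b k : ℝ):ℂ) * ((Gl lam (ξ - k) : ℝ) : ℂ)
        = (((∑ k ∈ s, b k * Gl lam (ξ - k)) : ℝ) : ℂ) := by push_cast; rfl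
    rw [hgre]
    refine ⟨?_, Complex.ofReal_im _⟩
    rw [Complex.ofReal_re]
    calc ‖∑ k ∈ s, a k * ((Gl lam (ξ - k) : ℝ) : ℂ)‖
        ≤ ∑ k ∈ s, ‖a k * ((Gl lam (ξ - k) : ℝ) : ℂ)‖ := norm_sum_le _ _
      _ ≤ ∑ k ∈ s, b k * Gl lam (ξ - k) := by
          apply Finset.sum_le_sum
          intro k _
          rw [norm_mul, Complex.norm_real, Real.norm_eq_abs,
            abs_of_pos (Gl_pos lam _ hlam)]
          exact mul_le_mul_of_nonneg_right (hab k) (Gl_pos lam _ hlam).le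
  · have hnf : ∀ x : ℝ, ‖(trigGauss a s lam hlam) x‖ ^ p
        = ‖q x‖ ^ p * Real.exp (-(lam * p) * x ^ 2) := by
      intro x
      rw [trigGauss_apply, ← hq x, norm_mul, Complex.norm_real, Real.norm_eq_abs,
        abs_of_pos (Real.exp_pos _), Real.mul_rpow (norm_nonneg _) (Real.exp_pos _).le,
        Real.rpow_def_of_pos (Real.exp_pos _), Real.log_exp]
      congr 2
      ring
    have hng : ∀ x : ℝ, ‖(trigGauss (fun k => ((b k : ℝ) : ℂ)) s lam hlam) x‖ ^ p
        = ‖Q x‖ ^ p * Real.exp (-(lam * p) * x ^ 2) := by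
      intro x
      rw [trigGauss_apply, ← hQ x, norm_mul, Complex.norm_real, Real.norm_eq_abs,
        abs_of_pos (Real.exp_pos _), Real.mul_rpow (norm_nonneg _) (Real.exp_pos _).le,
        Real.rpow_def_of_pos (Real.exp_pos _), Real.log_exp]
      congr 2
      ring
    have hbq := periodic_bound hqnc (fun x => by rw [hqper x])
    have hbQ := periodic_bound hQnc (fun x => by rw [hQper x])
    obtain ⟨Cq, hCq⟩ := hbq
    obtain ⟨CQ, hCQ⟩ := hbQ
    have hfi_q : Integrable (fun x => ‖q x‖ ^ p * Real.exp (-(lam * p) * x ^ 2)) := by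
      apply Integrable.bdd_mul (integrable_exp_neg_mul_sq ha) hqnc.aestronglyMeasurable
      exact Filter.Eventually.of_forall (fun x => by rw [Real.norm_eq_abs]; exact hCq x)
    have hfi_Q : Integrable (fun x => ‖Q x‖ ^ p * Real.exp (-(lam * p) * x ^ 2)) := by
      apply Integrable.bdd_mul (integrable_exp_neg_mul_sq ha) hQnc.aestronglyMeasurable
      exact Filter.Eventually.of_forall (fun x => by rw [Real.norm_eq_abs]; exact hCQ x)
    have key := hA₀ (lam * p) ha haA
    have hrw : (fun x => D x * Real.exp (-(lam * p) * x ^ 2))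
        = fun x => ‖q x‖ ^ p * Real.exp (-(lam * p) * x ^ 2)
          - ‖Q x‖ ^ p * Real.exp (-(lam * p) * x ^ 2) := by
      funext x; simp only [hD]; ring
    rw [hrw, integral_sub hfi_q hfi_Q] at key
    have hlt2 : (∫ x : ℝ, ‖(trigGauss (fun k => ((b k : ℝ) : ℂ)) s lam hlam) x‖ ^ p)
        < ∫ x : ℝ, ‖(trigGauss a s lam hlam) x‖ ^ p := by
      have e1 : (∫ x : ℝ, ‖(trigGauss a s lam hlam) x‖ ^ p)
          = ∫ x : ℝ, ‖q x‖ ^ p * Real.exp (-(lam * p) * x ^ 2) := by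
        simp only [hnf]
      have e2 : (∫ x : ℝ, ‖(trigGauss (fun k => ((b k : ℝ) : ℂ)) s lam hlam) x‖ ^ p)
          = ∫ x : ℝ, ‖Q x‖ ^ p * Real.exp (-(lam * p) * x ^ 2) := by
        simp only [hng]
      rw [e1, e2]
      linarith
    exact Real.rpow_lt_rpow (integral_nonneg fun x => by positivity) hlt2 (by positivity)
end
end

section
/- Let n ≥ 1, σ ∈ ℕ with σ ≥ 1, let q : ℝⁿ → ℝ be continuous with q(ξ) > 0 for all ξ, and let u : ℝⁿ → [0, ∞) be a continuous nonnegative function, not identically zero, which is real-analytic on ℝⁿ, such that the (2σ+1)-fold convolution (u ∗ u ∗ ⋯ ∗ u)(ξ) (with 2σ+1 factors) is finite for every ξ and u(ξ) = (1/q(ξ)) (u ∗ u ∗ ⋯ ∗ u)(ξ) for all ξ ∈ ℝⁿ. Then u(ξ) > 0 for every ξ ∈ ℝⁿ; in particular the set Ω = { ξ ∈ ℝⁿ : u(ξ) > 0 } equals ℝⁿ and is connected. -/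
open MeasureTheory

noncomputable section

/-- Euclidean space `ℝⁿ`. -/
abbrev Rn (n : ℕ) := EuclideanSpace ℝ (Fin n)

/-- `convPow u k` is the `(k+1)`-fold convolution power `u ∗ u ∗ ⋯ ∗ u` (with `k+1`
factors). -/
def convPow (n : ℕ) (u : Rn n → ℝ) : ℕ → Rn n → ℝ
  | 0 => u
  | (k + 1) => fun ξ => ∫ y : Rn n, convPow n u k (ξ - y) * u y

lemma convPow_nonneg (n : ℕ) (u : Rn n → ℝ) (h : ∀ ξ, 0 ≤ u ξ) :
    ∀ k ξ, 0 ≤ convPow n u k ξ := by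
  intro k
  induction k with
  | zero => exact h
  | succ k ih =>
    intro ξ
    exact integral_nonneg fun y => mul_nonneg (ih _) (h y)

lemma u_ball (n : ℕ) (u : Rn n → ℝ) (huc : Continuous u) {a : Rn n} (ha : 0 < u a) :
    ∃ r : ℝ, 0 < r ∧ ∀ ξ ∈ Metric.ball a r, u a / 2 ≤ u ξ := by
  have hopen : IsOpen {ξ : Rn n | u a / 2 < u ξ} := isOpen_lt continuous_const huc
  have hmem : a ∈ {ξ : Rn n | u a / 2 < u ξ} := by
    simp only [Set.mem_setOf_eq]; linarith
  obtain ⟨r, hr, hball⟩ := Metric.isOpen_iff.mp hopen a hmem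
  exact ⟨r, hr, fun ξ hξ => (hball hξ).le⟩

lemma convPow_posball (n : ℕ) (σ : ℕ) (u : Rn n → ℝ) (huc : Continuous u)
    (hunonneg : ∀ ξ : Rn n, 0 ≤ u ξ) {a : Rn n} (ha : 0 < u a)
    (hint : ∀ k : ℕ, k < 2 * σ → ∀ ξ : Rn n,
      Integrable (fun y : Rn n => convPow n u k (ξ - y) * u y)) :
    ∀ k : ℕ, k < 2 * σ → ∃ c : Rn n, ∃ r δ : ℝ, 0 < r ∧ 0 < δ ∧
      ∀ ξ ∈ Metric.ball c r, δ ≤ convPow n u k ξ := by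
  obtain ⟨r₀, hr₀, hu₀⟩ := u_ball n u huc ha
  intro k
  induction k with
  | zero =>
    intro _
    exact ⟨a, r₀, u a / 2, hr₀, by linarith, hu₀⟩
  | succ k ih =>
    intro hk
    obtain ⟨c, r, δ, hr, hδ, hlow⟩ := ih (by omega)
    set ρ : ℝ := min (r / 2) r₀ with hρdef
    have hρ : 0 < ρ := lt_min (by linarith) hr₀
    have hρr : ρ ≤ r / 2 := min_le_left _ _
    have hρr₀ : ρ ≤ r₀ := min_le_right _ _
    set ε : ℝ := u a / 2 with hεdef
    have hε : 0 < ε := by positivity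
    refine ⟨c + a, ρ, (volume (Metric.ball a ρ)).toReal * (δ * ε), hρ, ?_, ?_⟩
    · have h1 : 0 < volume (Metric.ball a ρ) := Metric.measure_ball_pos volume a hρ
      have h2 : volume (Metric.ball a ρ) ≠ ⊤ := (measure_ball_lt_top).ne
      have := ENNReal.toReal_pos h1.ne' h2
      positivity
    · intro ξ hξ
      have hfin : Integrable (fun y : Rn n => convPow n u k (ξ - y) * u y) :=
        hint k (by omega) ξ
      set g : Rn n → ℝ := (Metric.ball a ρ).indicator (fun _ => δ * ε) with hgdef
      have hgint : Integrable g := by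
        refine IntegrableOn.integrable_indicator ?_ Metric.isOpen_ball.measurableSet
        exact (integrableOn_const_iff).mpr (Or.inr measure_ball_lt_top)
      have hle : ∀ y, g y ≤ convPow n u k (ξ - y) * u y := by
        intro y
        by_cases hy : y ∈ Metric.ball a ρ
        · have hgy : g y = δ * ε := by simp [hgdef, Set.indicator_of_mem hy]
          rw [hgy]
          have hmem : ξ - y ∈ Metric.ball c r := by
            have h1 : dist (ξ - y) c ≤ dist (ξ - y) (ξ - a) + dist (ξ - a) c :=
              dist_triangle _ _ _
            have h2 : dist (ξ - y) (ξ - a) = dist y a := dist_sub_left ξ y a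
            have h3 : dist (ξ - a) c = dist ξ (c + a) := by
              rw [dist_eq_norm, dist_eq_norm]
              congr 1
              abel
            have hy' : dist y a < ρ := Metric.mem_ball.mp hy
            have hξ' : dist ξ (c + a) < ρ := Metric.mem_ball.mp hξ
            have : dist (ξ - y) c < r := by
              rw [h2, h3] at h1
              linarith
            exact Metric.mem_ball.mpr this
          have huy : ε ≤ u y := hu₀ y (Metric.ball_subset_ball hρr₀ hy)
          exact mul_le_mul (hlow _ hmem) huy hε.le
            (convPow_nonneg n u hunonneg k (ξ - y))
        · have hgy : g y = 0 := by simp [hgdef, Set.indicator_of_notMem hy]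
          rw [hgy]
          exact mul_nonneg (convPow_nonneg n u hunonneg k _) (hunonneg y)
      have hmono : ∫ y, g y ≤ ∫ y, convPow n u k (ξ - y) * u y :=
        integral_mono hgint hfin hle
      have hgval : ∫ y, g y = (volume (Metric.ball a ρ)).toReal * (δ * ε) := by
        rw [hgdef, integral_indicator_const _ Metric.isOpen_ball.measurableSet]
        simp [smul_eq_mul, measureReal_def]
      rw [← hgval]
      exact hmono

/-- Lemma 4.1 in Fourier-side form: if a nonnegative, continuous, real-analytic,
not identically vanishing function `u` satisfies `u = (1/q) (u ∗ ⋯ ∗ u)` (with `2σ+1`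
convolution factors) for a continuous strictly positive `q`, then `u > 0` everywhere;
in particular `Ω = {u > 0}` equals `ℝⁿ` and is connected. -/
theorem positivity_of_fourier_transform_of_ground_state
    (n : ℕ) (hn : 1 ≤ n) (σ : ℕ) (hσ : 1 ≤ σ)
    (q : Rn n → ℝ) (hqc : Continuous q) (hqpos : ∀ ξ : Rn n, 0 < q ξ)
    (u : Rn n → ℝ) (huc : Continuous u) (hunonneg : ∀ ξ : Rn n, 0 ≤ u ξ)
    (hune : ∃ ξ : Rn n, u ξ ≠ 0)
    (huan : ∀ ξ : Rn n, AnalyticAt ℝ u ξ)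
    (hint : ∀ k : ℕ, k < 2 * σ → ∀ ξ : Rn n,
      Integrable (fun y : Rn n => convPow n u k (ξ - y) * u y))
    (heq : ∀ ξ : Rn n, u ξ = (1 / q ξ) * convPow n u (2 * σ) ξ) :
    (∀ ξ : Rn n, 0 < u ξ) ∧ {ξ : Rn n | 0 < u ξ} = Set.univ ∧
      IsConnected {ξ : Rn n | 0 < u ξ} := by
  obtain ⟨a, ha⟩ := hune
  have hapos : 0 < u a := lt_of_le_of_ne (hunonneg a) (Ne.symm ha)
  have hpos : ∀ ξ : Rn n, 0 < u ξ := by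
    intro ξ₀
    by_contra hcon
    have hz : u ξ₀ = 0 := le_antisymm (not_lt.mp hcon) (hunonneg ξ₀)
    -- the top convolution vanishes at ξ₀
    have hX : convPow n u (2 * σ) ξ₀ = 0 := by
      have h := heq ξ₀
      rw [hz] at h
      rcases mul_eq_zero.mp h.symm with h' | h'
      · exact absurd h' (one_div_pos.mpr (hqpos ξ₀)).ne'
      · exact h'
    -- rewrite as integral
    have h2 : 2 * σ = (2 * σ - 1) + 1 := by omega
    have hrepr : convPow n u (2 * σ) ξ₀
        = ∫ y, convPow n u (2 * σ - 1) (ξ₀ - y) * u y := by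
      rw [congrArg (fun m => convPow n u m ξ₀) h2]
      rfl
    have hfint : Integrable (fun y : Rn n => convPow n u (2 * σ - 1) (ξ₀ - y) * u y) :=
      hint (2 * σ - 1) (by omega) ξ₀
    have hfnn : 0 ≤ fun y : Rn n => convPow n u (2 * σ - 1) (ξ₀ - y) * u y :=
      fun y => mul_nonneg (convPow_nonneg n u hunonneg _ _) (hunonneg y)
    have hae : (fun y : Rn n => convPow n u (2 * σ - 1) (ξ₀ - y) * u y) =ᵐ[volume] 0 := by
      rw [← MeasureTheory.integral_eq_zero_iff_of_nonneg hfnn hfint]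
      rw [← hrepr]
      exact hX
    -- lower bound for convPow (2σ-1) on a ball
    obtain ⟨c, r, δ, hr, hδ, hlow⟩ :=
      convPow_posball n σ u huc hunonneg hapos hint (2 * σ - 1) (by omega)
    -- u vanishes on ball (ξ₀ - c) r
    have hzero : ∀ y ∈ Metric.ball (ξ₀ - c) r, u y = 0 := by
      intro y₁ hy₁
      by_contra hy₁ne
      have hy₁pos : 0 < u y₁ := lt_of_le_of_ne (hunonneg y₁) (Ne.symm hy₁ne)
      -- a small open neighborhood where the integrand is positive
      have hopen : IsOpen (Metric.ball (ξ₀ - c) r ∩ {y : Rn n | 0 < u y}) :=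
        Metric.isOpen_ball.inter (isOpen_lt continuous_const huc)
      have hne : (Metric.ball (ξ₀ - c) r ∩ {y : Rn n | 0 < u y}).Nonempty :=
        ⟨y₁, hy₁, hy₁pos⟩
      have hsub : (Metric.ball (ξ₀ - c) r ∩ {y : Rn n | 0 < u y})
          ⊆ {y : Rn n | convPow n u (2 * σ - 1) (ξ₀ - y) * u y ≠ 0} := by
        rintro y ⟨hyb, hyu⟩
        have hmem : ξ₀ - y ∈ Metric.ball c r := by
          have : dist (ξ₀ - y) c = dist y (ξ₀ - c) := by
            rw [dist_eq_norm, dist_eq_norm, ← norm_neg (ξ₀ - y - c)]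
            congr 1
            abel
          rw [Metric.mem_ball, this]
          exact Metric.mem_ball.mp hyb
        have h1 : 0 < convPow n u (2 * σ - 1) (ξ₀ - y) := lt_of_lt_of_le hδ (hlow _ hmem)
        exact (mul_pos h1 hyu).ne'
      have hnull : volume {y : Rn n | convPow n u (2 * σ - 1) (ξ₀ - y) * u y ≠ 0} = 0 := by
        have := hae
        rw [Filter.EventuallyEq, ae_iff] at this
        simpa using this
      have hposmeas : 0 < volume (Metric.ball (ξ₀ - c) r ∩ {y : Rn n | 0 < u y}) :=
        hopen.measure_pos volume hne
      have : volume (Metric.ball (ξ₀ - c) r ∩ {y : Rn n | 0 < u y}) = 0 :=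
        measure_mono_null hsub hnull
      exact hposmeas.ne' this
    -- analytic continuation: u vanishes identically, contradiction
    have hev : u =ᶠ[nhds (ξ₀ - c)] 0 :=
      Filter.eventually_of_mem (Metric.ball_mem_nhds _ hr) hzero
    have han : AnalyticOnNhd ℝ u Set.univ := fun ξ _ => huan ξ
    have hEq : Set.EqOn u 0 Set.univ :=
      han.eqOn_zero_of_preconnected_of_eventuallyEq_zero isPreconnected_univ
        (Set.mem_univ (ξ₀ - c)) hev
    exact ha (hEq (Set.mem_univ a))
  have hset : {ξ : Rn n | 0 < u ξ} = Set.univ := by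
    ext ξ; simp [hpos ξ]
  refine ⟨hpos, hset, ?_⟩
  rw [hset]
  exact isConnected_univ
end
end
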